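/- Let n ≥ 1 and g ≥ 1 be integers. The symplectic group Sp_{2g}(ℤ/nℤ) is generated by the matrices B_g(A) for A ∈ GL_g(ℤ/nℤ), the matrices S_g(C) for C ∈ M_g(ℤ/nℤ) symmetric, and the matrix H_g. -/

import Mathlib

open Matrix


variable {R : Type*} [CommRing R]

theorem pivot_core {g : ℕ} (A E P Q : Matrix (Fin g) (Fin g) R)
    (hE2 : E * E = E) (h1 : A * E = E * Aᵀ) (h2 : A * P + E * Q = 1) :
    (A + E * (E - A * E)) * (P - E * (P - Q - A * E * P)) = 1 := by
  have hF1 : E * (A * E) = A * E := by rw [h1, ← mul_assoc, hE2]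
  have hE2R : ∀ X : Matrix (Fin g) (Fin g) R, E * (E * X) = E * X := fun X => by
    rw [← mul_assoc, hE2]
  have hF1R : ∀ X : Matrix (Fin g) (Fin g) R, E * (A * (E * X)) = A * (E * X) := fun X => by
    rw [← mul_assoc, ← mul_assoc, mul_assoc E A E, hF1, mul_assoc]
  have hAP : A * P = 1 - E * Q := by rw [eq_sub_iff_add_eq]; exact h2
  simp only [mul_add, mul_sub, sub_mul, add_mul, mul_assoc, hE2R, hF1R, hE2, hF1, hAP]
  abel

/-- The key pivot property of a commutative ring. -/
def PivotProp (R : Type*) [CommRing R] : Prop :=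
  ∀ (g : ℕ) (A B : Matrix (Fin g) (Fin g) R), A * Bᵀ = B * Aᵀ →
    (∃ P Q : Matrix (Fin g) (Fin g) R, A * P + B * Q = 1) →
    ∃ S : Matrix (Fin g) (Fin g) R, Sᵀ = S ∧ IsUnit (A + B * S)

/-- transpose of a unit matrix, as a unit -/
def tUnit {n : Type*} [Fintype n] [DecidableEq n] (u : (Matrix n n R)ˣ) : (Matrix n n R)ˣ where
  val := (u : Matrix n n R)ᵀ
  inv := ((u⁻¹ : (Matrix n n R)ˣ) : Matrix n n R)ᵀ
  val_inv := by rw [← transpose_mul, u.inv_mul, transpose_one]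
  inv_val := by rw [← transpose_mul, u.mul_inv, transpose_one]

theorem pivotProp_of_field (K : Type*) [Field K] : PivotProp K := by
  classical
  intro g A B hsym ⟨P, Q, hPQ⟩
  obtain ⟨L, L2, d, hB⟩ := Pivot.exists_list_transvec_mul_diagonal_mul_list_transvec B
  set U₀ : Matrix (Fin g) (Fin g) K := (L.map TransvectionStruct.toMatrix).prod with hU₀
  set V₀ : Matrix (Fin g) (Fin g) K := (L2.map TransvectionStruct.toMatrix).prod with hV₀
  have hU₀u : IsUnit U₀ := by
    rw [Matrix.isUnit_iff_isUnit_det, TransvectionStruct.det_toMatrix_prod]; exact isUnit_one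
  have hV₀u : IsUnit V₀ := by
    rw [Matrix.isUnit_iff_isUnit_det, TransvectionStruct.det_toMatrix_prod]; exact isUnit_one
  set E : Matrix (Fin g) (Fin g) K := diagonal (fun i => if d i = 0 then 0 else 1) with hE
  set D' : Matrix (Fin g) (Fin g) K := diagonal (fun i => if d i = 0 then 1 else d i) with hD'
  have hD'u : IsUnit D' := by
    rw [Matrix.isUnit_iff_isUnit_det, det_diagonal, isUnit_iff_ne_zero, Finset.prod_ne_zero_iff]
    intro i _
    by_cases h : d i = 0 <;> simp [h]
  have hE2 : E * E = E := by
    rw [hE, diagonal_mul_diagonal]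
    exact congrArg diagonal (funext fun i => by by_cases h : d i = 0 <;> simp [h])
  have hEt : Eᵀ = E := diagonal_transpose _
  have hDE : D' * E = diagonal d := by
    rw [hD', hE, diagonal_mul_diagonal]
    exact congrArg diagonal (funext fun i => by by_cases h : d i = 0 <;> simp [h])
  have hUu : IsUnit (U₀ * D') := hU₀u.mul hD'u
  obtain ⟨u, hu⟩ := hUu
  obtain ⟨v, hv⟩ := hV₀u
  have hBdec : B = (↑u : Matrix (Fin g) (Fin g) K) * E * (↑v : Matrix (Fin g) (Fin g) K) := by
    rw [hu, hv, hB, mul_assoc U₀ D' E, hDE]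
  clear hB hU₀ hV₀ hU₀u hD'u hDE hu hv hD' hE
  set uK : Matrix (Fin g) (Fin g) K := ↑u with huK
  set vK : Matrix (Fin g) (Fin g) K := ↑v with hvK
  set uI : Matrix (Fin g) (Fin g) K := ↑u⁻¹ with huI
  set vI : Matrix (Fin g) (Fin g) K := ↑v⁻¹ with hvI
  -- cancellation lemmas
  have buIu : uI * uK = 1 := u.inv_mul
  have buuI : uK * uI = 1 := u.mul_inv
  have bvIv : vI * vK = 1 := v.inv_mul
  have bvvI : vK * vI = 1 := v.mul_inv
  have bvT : vKᵀ * vIᵀ = 1 := by rw [← transpose_mul, bvIv, transpose_one]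
  have bvT' : vIᵀ * vKᵀ = 1 := by rw [← transpose_mul, bvvI, transpose_one]
  have buT : uIᵀ * uKᵀ = 1 := by rw [← transpose_mul, buuI, transpose_one]
  have buT' : uKᵀ * uIᵀ = 1 := by rw [← transpose_mul, buIu, transpose_one]
  have cuuI : ∀ X : Matrix (Fin g) (Fin g) K, uK * (uI * X) = X := fun X => by
    rw [← mul_assoc, buuI, one_mul]
  have cuIu : ∀ X : Matrix (Fin g) (Fin g) K, uI * (uK * X) = X := fun X => by
    rw [← mul_assoc, buIu, one_mul]
  have cvvI : ∀ X : Matrix (Fin g) (Fin g) K, vK * (vI * X) = X := fun X => by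
    rw [← mul_assoc, bvvI, one_mul]
  have cvIv : ∀ X : Matrix (Fin g) (Fin g) K, vI * (vK * X) = X := fun X => by
    rw [← mul_assoc, bvIv, one_mul]
  have cvT : ∀ X : Matrix (Fin g) (Fin g) K, vKᵀ * (vIᵀ * X) = X := fun X => by
    rw [← mul_assoc, bvT, one_mul]
  have cvT' : ∀ X : Matrix (Fin g) (Fin g) K, vIᵀ * (vKᵀ * X) = X := fun X => by
    rw [← mul_assoc, bvT', one_mul]
  have cuT : ∀ X : Matrix (Fin g) (Fin g) K, uIᵀ * (uKᵀ * X) = X := fun X => by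
    rw [← mul_assoc, buT, one_mul]
  set At : Matrix (Fin g) (Fin g) K := uI * A * vKᵀ with hAt
  have hsym' : A * (vKᵀ * (E * uKᵀ)) = uK * (E * (vK * Aᵀ)) := by
    have h := hsym
    rw [hBdec] at h
    simp only [transpose_mul, hEt, mul_assoc] at h
    simpa [mul_assoc] using h
  have h1 : At * E = E * Atᵀ := by
    rw [← Units.mul_right_inj u, ← Units.mul_left_inj (tUnit u)]
    show uK * (At * E) * uKᵀ = uK * (E * Atᵀ) * uKᵀ
    rw [hAt]
    simp only [transpose_mul, transpose_transpose, mul_assoc, buT, mul_one, cuuI]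
    exact hsym'
  have h2 : At * (vIᵀ * (P * uK)) + E * (vK * (Q * uK)) = 1 := by
    have e1 : At * (vIᵀ * (P * uK)) = uI * (A * (P * uK)) := by
      rw [hAt]; simp only [mul_assoc, cvT]
    have e2 : E * (vK * (Q * uK)) = uI * (B * (Q * uK)) := by
      rw [hBdec]; simp only [mul_assoc, cuIu]
    rw [e1, e2, ← mul_add]
    have e3 : A * (P * uK) + B * (Q * uK) = (A * P + B * Q) * uK := by noncomm_ring
    rw [e3, hPQ, one_mul, buIu]
  have key := pivot_core At E (vIᵀ * (P * uK)) (vK * (Q * uK)) hE2 h1 h2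
  have hXu : IsUnit (At + E * (E - At * E)) := by
    rw [Matrix.isUnit_iff_isUnit_det]
    exact IsUnit.of_mul_eq_one _ (by rw [← det_mul, key, det_one])
  have hSt : (E - At * E)ᵀ = E - At * E := by
    rw [transpose_sub, transpose_mul, hEt, ← h1]
  refine ⟨vI * (E - At * E) * vIᵀ, ?_, ?_⟩
  · rw [transpose_mul, transpose_mul, transpose_transpose, hSt]
    exact (mul_assoc _ _ _).symm
  · have final : A + B * (vI * (E - At * E) * vIᵀ)
        = uK * ((At + E * (E - At * E)) * vIᵀ) := by
      rw [hBdec, hAt]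
      simp only [add_mul, mul_add, mul_assoc, cvvI, cuuI, cvT, bvT, mul_one]
    rw [final]
    exact u.isUnit.mul (hXu.mul ((isUnit_transpose _).mpr v⁻¹.isUnit))



section transfer
variable {R R' : Type*} [CommRing R] [CommRing R']

theorem mapMatrix_transpose {g : ℕ} (f : R →+* R') (M : Matrix (Fin g) (Fin g) R) :
    f.mapMatrix Mᵀ = (f.mapMatrix M)ᵀ := by
  simp [RingHom.mapMatrix_apply, Matrix.transpose_map]

theorem pivot_hyps_map (f : R →+* R') {g : ℕ} {A B : Matrix (Fin g) (Fin g) R}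
    (hsym : A * Bᵀ = B * Aᵀ) (hex : ∃ P Q : Matrix (Fin g) (Fin g) R, A * P + B * Q = 1) :
    (f.mapMatrix A) * (f.mapMatrix B)ᵀ = (f.mapMatrix B) * (f.mapMatrix A)ᵀ ∧
      ∃ P' Q' : Matrix (Fin g) (Fin g) R', (f.mapMatrix A) * P' + (f.mapMatrix B) * Q' = 1 := by
  obtain ⟨P, Q, hPQ⟩ := hex
  constructor
  · have := congrArg f.mapMatrix hsym
    simpa only [_root_.map_mul, mapMatrix_transpose] using this
  · refine ⟨f.mapMatrix P, f.mapMatrix Q, ?_⟩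
    have := congrArg f.mapMatrix hPQ
    simpa only [_root_.map_mul, _root_.map_add, _root_.map_one] using this

theorem PivotProp.of_hom (f : R →+* R') (hu : ∀ x : R, IsUnit (f x) → IsUnit x)
    (s : R' → R) (hs : ∀ y, f (s y) = y) (h : PivotProp R') : PivotProp R := by
  intro g A B hsym hex
  obtain ⟨hsym', hex'⟩ := pivot_hyps_map f hsym hex
  obtain ⟨S', hS't, hS'u⟩ := h g (f.mapMatrix A) (f.mapMatrix B) hsym' hex'
  refine ⟨Matrix.of fun i j => s (S' i j), ?_, ?_⟩
  · ext i j
    have e : S' j i = S' i j := by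
      have := congrFun (congrFun hS't i) j
      simpa [Matrix.transpose_apply] using this
    simp [Matrix.transpose_apply, Matrix.of_apply, e]
  · have hSmap : f.mapMatrix (Matrix.of fun i j => s (S' i j)) = S' := by
      ext i j; simp [RingHom.mapMatrix_apply, hs]
    rw [Matrix.isUnit_iff_isUnit_det]
    apply hu
    rw [RingHom.map_det]
    have : f.mapMatrix (A + B * Matrix.of fun i j => s (S' i j))
        = f.mapMatrix A + f.mapMatrix B * S' := by
      rw [_root_.map_add, _root_.map_mul, hSmap]
    rw [this, ← Matrix.isUnit_iff_isUnit_det]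
    exact hS'u

theorem isUnit_prod_mk {M N : Type*} [Monoid M] [Monoid N] {x : M} {y : N}
    (h1 : IsUnit x) (h2 : IsUnit y) : IsUnit (x, y) := by
  obtain ⟨a, ha⟩ := h1
  obtain ⟨b, hb⟩ := h2
  refine ⟨⟨(↑a, ↑b), (↑a⁻¹, ↑b⁻¹),
    by rw [Prod.mk_mul_mk, a.mul_inv, b.mul_inv]; rfl,
    by rw [Prod.mk_mul_mk, a.inv_mul, b.inv_mul]; rfl⟩, ?_⟩
  rw [← ha, ← hb]

theorem PivotProp.prod (h1 : PivotProp R) (h2 : PivotProp R') : PivotProp (R × R') := by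
  intro g A B hsym hex
  obtain ⟨hsym1, hex1⟩ := pivot_hyps_map (RingHom.fst R R') hsym hex
  obtain ⟨hsym2, hex2⟩ := pivot_hyps_map (RingHom.snd R R') hsym hex
  obtain ⟨S1, hS1t, hS1u⟩ := h1 g _ _ hsym1 hex1
  obtain ⟨S2, hS2t, hS2u⟩ := h2 g _ _ hsym2 hex2
  set S : Matrix (Fin g) (Fin g) (R × R') := Matrix.of fun i j => (S1 i j, S2 i j) with hS
  have hm1 : (RingHom.fst R R').mapMatrix S = S1 := by
    ext i j; simp [RingHom.mapMatrix_apply, hS]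
  have hm2 : (RingHom.snd R R').mapMatrix S = S2 := by
    ext i j; simp [RingHom.mapMatrix_apply, hS]
  have e1 : ∀ i j, S1 j i = S1 i j := fun i j => by
    have := congrFun (congrFun hS1t i) j; simpa using this
  have e2 : ∀ i j, S2 j i = S2 i j := fun i j => by
    have := congrFun (congrFun hS2t i) j; simpa using this
  refine ⟨S, ?_, ?_⟩
  · ext i j <;> simp [hS, Matrix.transpose_apply, Matrix.of_apply, e1, e2]
  · rw [Matrix.isUnit_iff_isUnit_det]
    have hfst : (RingHom.fst R R') (A + B * S).det
        = ((RingHom.fst R R').mapMatrix A + (RingHom.fst R R').mapMatrix B * S1).det := by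
      rw [RingHom.map_det, _root_.map_add, _root_.map_mul, hm1]
    have hsnd : (RingHom.snd R R') (A + B * S).det
        = ((RingHom.snd R R').mapMatrix A + (RingHom.snd R R').mapMatrix B * S2).det := by
      rw [RingHom.map_det, _root_.map_add, _root_.map_mul, hm2]
    have hxP : (A + B * S).det = (((A + B * S).det).1, ((A + B * S).det).2) := rfl
    rw [hxP]
    exact isUnit_prod_mk
      (by rw [show ((A + B * S).det).1 = (RingHom.fst R R') (A + B * S).det from rfl, hfst,
            ← Matrix.isUnit_iff_isUnit_det]; exact hS1u)
      (by rw [show ((A + B * S).det).2 = (RingHom.snd R R') (A + B * S).det from rfl, hsnd,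
            ← Matrix.isUnit_iff_isUnit_det]; exact hS2u)

end transfer

section zmod

theorem pivotProp_of_subsingleton (R : Type*) [CommRing R] [Subsingleton R] : PivotProp R := by
  intro g A B _ _
  exact ⟨0, by simp, isUnit_of_subsingleton _⟩


theorem pivotProp_zmod_prime_pow (p k : ℕ) (hp : p.Prime) (hk : 0 < k) :
    PivotProp (ZMod (p ^ k)) := by
  haveI : Fact p.Prime := ⟨hp⟩
  have hdvd : p ∣ p ^ k := dvd_pow_self p hk.ne'
  haveI : NeZero (p ^ k) := ⟨pow_ne_zero _ hp.ne_zero⟩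
  refine PivotProp.of_hom (ZMod.castHom hdvd (ZMod p)) ?_
    (fun y => ((y.val : ℕ) : ZMod (p ^ k))) ?_ (pivotProp_of_field (ZMod p))
  · intro x hx
    have hxval : ((x.val : ℕ) : ZMod (p ^ k)) = x := by
      simp [ZMod.natCast_val, ZMod.cast_id]
    have h1 : (ZMod.castHom hdvd (ZMod p)) x = ((x.val : ℕ) : ZMod p) := by
      conv_lhs => rw [← hxval]
      rw [map_natCast]
    rw [h1, ZMod.isUnit_iff_coprime] at hx
    rw [← hxval, ZMod.isUnit_iff_coprime]
    exact Nat.Coprime.pow_right k hx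
  · intro y
    rw [map_natCast]
    simp [ZMod.natCast_val, ZMod.cast_id]

theorem pivotProp_zmod : ∀ n : ℕ, n ≠ 0 → PivotProp (ZMod n) := by
  refine Nat.recOnPosPrimePosCoprime (motive := fun n => n ≠ 0 → PivotProp (ZMod n)) ?_ ?_ ?_ ?_
  · exact fun p k hp hk _ => pivotProp_zmod_prime_pow p k hp hk
  · exact fun h => absurd rfl h
  · exact fun _ => pivotProp_of_subsingleton _
  · intro a b ha hb hab iha ihb _
    have e : ZMod (a * b) ≃+* ZMod a × ZMod b := ZMod.chineseRemainder hab
    refine PivotProp.of_hom e.toRingHom ?_ e.symm (fun y => e.apply_symm_apply y) ?_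
    · intro x hx
      have := hx.map e.symm.toRingHom
      simpa using this
    · exact PivotProp.prod (iha (by omega)) (ihb (by omega))

end zmod


variable {R : Type*} [CommRing R] {g : ℕ}

namespace SpAux

abbrev Jm (g : ℕ) (R : Type*) [CommRing R] : Matrix (Fin g ⊕ Fin g) (Fin g ⊕ Fin g) R :=
  fromBlocks 0 1 (-1) 0

theorem J_mul_J : Jm g R * Jm g R = -1 := by
  have h1 : (-1 : Matrix (Fin g ⊕ Fin g) (Fin g ⊕ Fin g) R)
      = -(fromBlocks 1 0 0 1) := by rw [fromBlocks_one]
  rw [h1, fromBlocks_neg, neg_zero]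
  simp [Jm, fromBlocks_multiply]

theorem sp_one : (1 : Matrix (Fin g ⊕ Fin g) (Fin g ⊕ Fin g) R)ᵀ * Jm g R * 1 = Jm g R := by
  simp

theorem sp_mul {M N : Matrix (Fin g ⊕ Fin g) (Fin g ⊕ Fin g) R}
    (hM : Mᵀ * Jm g R * M = Jm g R) (hN : Nᵀ * Jm g R * N = Jm g R) :
    (M * N)ᵀ * Jm g R * (M * N) = Jm g R := by
  rw [transpose_mul]
  calc Nᵀ * Mᵀ * Jm g R * (M * N) = Nᵀ * (Mᵀ * Jm g R * M) * N := by
        simp only [mul_assoc]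
    _ = Jm g R := by rw [hM]; exact hN

theorem sp_other {M : Matrix (Fin g ⊕ Fin g) (Fin g ⊕ Fin g) R}
    (hM : Mᵀ * Jm g R * M = Jm g R) : M * Jm g R * Mᵀ = Jm g R := by
  have hleft : (-(Jm g R * Mᵀ * Jm g R)) * M = 1 := by
    calc (-(Jm g R * Mᵀ * Jm g R)) * M = -(Jm g R * (Mᵀ * Jm g R * M)) := by
          simp only [neg_mul, mul_assoc]
    _ = -(Jm g R * Jm g R) := by rw [hM]
    _ = 1 := by rw [J_mul_J, neg_neg]
  have hright : M * (-(Jm g R * Mᵀ * Jm g R)) = 1 := mul_eq_one_comm.mp hleft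
  have h2 : M * Jm g R * Mᵀ * Jm g R = -1 := by
    have : -(M * (Jm g R * Mᵀ * Jm g R)) = 1 := by
      rw [← mul_neg]; exact hright
    calc M * Jm g R * Mᵀ * Jm g R = M * (Jm g R * Mᵀ * Jm g R) := by simp only [mul_assoc]
    _ = -1 := by rw [← neg_neg (M * (Jm g R * Mᵀ * Jm g R)), this]
  calc M * Jm g R * Mᵀ = -(M * Jm g R * Mᵀ * Jm g R * Jm g R) := by
        rw [mul_assoc (M * Jm g R * Mᵀ), J_mul_J]; simp
  _ = -(-1 * Jm g R) := by rw [h2]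
  _ = Jm g R := by simp

theorem blocks_of_sp_other {A B C D : Matrix (Fin g) (Fin g) R}
    (h : fromBlocks A B C D * Jm g R * (fromBlocks A B C D)ᵀ = Jm g R) :
    A * Bᵀ = B * Aᵀ ∧ A * Dᵀ - B * Cᵀ = 1 := by
  rw [fromBlocks_transpose] at h
  simp only [Jm, fromBlocks_multiply, mul_zero, mul_one, mul_neg_one, zero_add, add_zero,
    mul_neg, neg_mul, zero_mul, one_mul] at h
  rw [fromBlocks_inj] at h
  obtain ⟨h11, h12, h21, h22⟩ := h
  constructor
  · rw [neg_add_eq_sub, sub_eq_zero] at h11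
    exact h11
  · rw [neg_add_eq_sub, sub_eq_iff_eq_add] at h12
    rw [sub_eq_iff_eq_add, h12]

theorem blocks_of_sp {A B C D : Matrix (Fin g) (Fin g) R}
    (h : (fromBlocks A B C D)ᵀ * Jm g R * fromBlocks A B C D = Jm g R) :
    Aᵀ * C = Cᵀ * A ∧ Aᵀ * D - Cᵀ * B = 1 := by
  rw [fromBlocks_transpose] at h
  simp only [Jm, fromBlocks_multiply, mul_zero, mul_one, mul_neg_one, zero_add, add_zero,
    mul_neg, neg_mul, zero_mul, one_mul] at h
  rw [fromBlocks_inj] at h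
  obtain ⟨h11, h12, h21, h22⟩ := h
  constructor
  · rw [neg_add_eq_sub, sub_eq_zero] at h11
    exact h11
  · rw [neg_add_eq_sub, sub_eq_iff_eq_add] at h12
    rw [sub_eq_iff_eq_add, h12]

theorem Ugen (X : Matrix (Fin g) (Fin g) R) :
    fromBlocks 1 X 0 1 =
      Jm g R * fromBlocks 1 0 (-X) 1 * (Jm g R * (Jm g R * Jm g R)) := by
  rw [← mul_assoc (Jm g R) (Jm g R), J_mul_J]
  simp only [Jm, fromBlocks_multiply, neg_mul, mul_neg, mul_one, one_mul, mul_zero, zero_mul,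
    zero_add, add_zero, neg_neg, neg_zero, mul_neg_one]
  rw [fromBlocks_neg, fromBlocks_inj]
  refine ⟨by simp, by simp, by simp, by simp⟩

theorem decompose {A B C D : Matrix (Fin g) (Fin g) R} (u : (Matrix (Fin g) (Fin g) R)ˣ)
    (hu : (↑u : Matrix (Fin g) (Fin g) R) = A)
    (hsp : (fromBlocks A B C D)ᵀ * Jm g R * fromBlocks A B C D = Jm g R) :
    (C * (↑u⁻¹ : Matrix (Fin g) (Fin g) R))ᵀ = C * (↑u⁻¹ : Matrix (Fin g) (Fin g) R) ∧
    ((↑u⁻¹ : Matrix (Fin g) (Fin g) R) * B)ᵀ = (↑u⁻¹ : Matrix (Fin g) (Fin g) R) * B ∧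
    fromBlocks A B C D =
      fromBlocks 1 0 (C * (↑u⁻¹ : Matrix (Fin g) (Fin g) R)) 1 *
        fromBlocks A 0 0 ((↑u⁻¹ : Matrix (Fin g) (Fin g) R))ᵀ *
        fromBlocks 1 ((↑u⁻¹ : Matrix (Fin g) (Fin g) R) * B) 0 1 := by
  obtain ⟨r1, r2⟩ := blocks_of_sp hsp
  obtain ⟨r4, r5⟩ := blocks_of_sp_other (sp_other hsp)
  set uI : Matrix (Fin g) (Fin g) R := ↑u⁻¹ with huI
  have hIu : uI * A = 1 := by rw [huI, ← hu]; exact u.inv_mul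
  have hAI : A * uI = 1 := by rw [huI, ← hu]; exact u.mul_inv
  have hIuT : uIᵀ * Aᵀ = 1 := by rw [← transpose_mul, hAI, transpose_one]
  have hAIT : Aᵀ * uIᵀ = 1 := by rw [← transpose_mul, hIu, transpose_one]
  have hCsym : (C * uI)ᵀ = C * uI := by
    rw [transpose_mul]
    calc uIᵀ * Cᵀ = uIᵀ * (Cᵀ * (A * uI)) := by rw [hAI, mul_one]
      _ = uIᵀ * (Cᵀ * A) * uI := by simp only [mul_assoc]
      _ = uIᵀ * (Aᵀ * C) * uI := by rw [← r1]
      _ = (uIᵀ * Aᵀ) * (C * uI) := by simp only [mul_assoc]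
      _ = C * uI := by rw [hIuT, one_mul]
  have hBsym : (uI * B)ᵀ = uI * B := by
    rw [transpose_mul]
    calc Bᵀ * uIᵀ = uI * (A * Bᵀ) * uIᵀ := by rw [← mul_assoc, hIu, one_mul]
      _ = uI * (B * Aᵀ) * uIᵀ := by rw [r4]
      _ = uI * B * (Aᵀ * uIᵀ) := by simp only [mul_assoc]
      _ = uI * B := by rw [hAIT, mul_one]
  refine ⟨hCsym, hBsym, ?_⟩
  have hD : D = C * (uI * B) + uIᵀ := by
    have h2' : Aᵀ * D = 1 + Cᵀ * B := by
      rw [← r2]; noncomm_ring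
    calc D = (uIᵀ * Aᵀ) * D := by rw [hIuT, one_mul]
      _ = uIᵀ * (Aᵀ * D) := by rw [mul_assoc]
      _ = uIᵀ * (1 + Cᵀ * B) := by rw [h2']
      _ = uIᵀ + uIᵀ * Cᵀ * B := by noncomm_ring
      _ = uIᵀ + (C * uI)ᵀ * B := by rw [transpose_mul]
      _ = uIᵀ + C * uI * B := by rw [hCsym]
      _ = C * (uI * B) + uIᵀ := by noncomm_ring
  rw [fromBlocks_multiply, fromBlocks_multiply]
  simp only [one_mul, mul_one, zero_mul, mul_zero, add_zero, zero_add]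
  rw [fromBlocks_inj]
  have eC : C * uI * A = C := by rw [mul_assoc, hIu, mul_one]
  refine ⟨rfl, ?_, eC.symm, ?_⟩
  · rw [← mul_assoc, hAI, one_mul]
  · rw [eC]
    exact hD

theorem sp_H : (Jm g R)ᵀ * Jm g R * Jm g R = Jm g R := by
  simp only [Jm, fromBlocks_transpose, transpose_one, transpose_zero, transpose_neg,
    fromBlocks_multiply, mul_zero, mul_one, zero_mul, one_mul, zero_add, add_zero,
    mul_neg, neg_mul, neg_neg, neg_zero, mul_neg_one]

theorem sp_S (C : Matrix (Fin g) (Fin g) R) (hC : Cᵀ = C) :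
    (fromBlocks 1 0 C 1)ᵀ * Jm g R * fromBlocks 1 0 C 1 = Jm g R := by
  rw [fromBlocks_transpose]
  simp only [Jm, transpose_one, transpose_zero, fromBlocks_multiply, mul_zero, mul_one,
    zero_mul, one_mul, zero_add, add_zero, mul_neg, neg_mul, mul_neg_one, neg_zero]
  rw [fromBlocks_inj]
  refine ⟨by rw [hC]; simp, by simp, by simp, by simp⟩

theorem sp_B (u : (Matrix (Fin g) (Fin g) R)ˣ) :
    (fromBlocks (↑u : Matrix (Fin g) (Fin g) R) 0 0 ((↑u⁻¹ : Matrix (Fin g) (Fin g) R))ᵀ)ᵀ *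
      Jm g R * fromBlocks (↑u : Matrix (Fin g) (Fin g) R) 0 0
        ((↑u⁻¹ : Matrix (Fin g) (Fin g) R))ᵀ = Jm g R := by
  rw [fromBlocks_transpose]
  simp only [Jm, transpose_zero, transpose_transpose, fromBlocks_multiply, mul_zero, mul_one,
    zero_mul, one_mul, zero_add, add_zero, mul_neg, neg_mul, mul_neg_one, neg_zero]
  rw [fromBlocks_inj]
  refine ⟨by simp, ?_, ?_, by simp⟩
  · rw [← transpose_mul, u.inv_mul, transpose_one]
  · rw [u.inv_mul]

end SpAux


/-- For integers `g ≥ 1` and `n ≥ 1`, the symplectic group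
`Sp_{2g}(ℤ/nℤ)` (the monoid of `2g × 2g` matrices `M` over `ℤ/nℤ` with
`ᵗM·J·M = J`, where `J = [[0, 1],[−1, 0]]` in `g × g` block form) is generated by
the matrices `B_g(A) = [[A,0],[0,ᵗA⁻¹]]` for `A ∈ GL_g(ℤ/nℤ)`, the matrices
`S_g(C) = [[1,0],[C,1]]` for `C ∈ M_g(ℤ/nℤ)` symmetric, and the matrix
`H_g = [[0,1],[−1,0]]`. -/
theorem symplectic_group_generated_by_Bg_Sg_Hg (g n : ℕ) (hg : 1 ≤ g) (hn : 1 ≤ n) :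
    (Submonoid.closure
        ({M | ∃ A : GL (Fin g) (ZMod n),
            M = Matrix.fromBlocks (A : Matrix (Fin g) (Fin g) (ZMod n)) 0 0
              (Matrix.transpose ((A⁻¹ : GL (Fin g) (ZMod n)) : Matrix (Fin g) (Fin g) (ZMod n)))} ∪
         {M | ∃ C : Matrix (Fin g) (Fin g) (ZMod n), C.IsSymm ∧
            M = Matrix.fromBlocks 1 0 C 1} ∪
         {Matrix.fromBlocks (0 : Matrix (Fin g) (Fin g) (ZMod n)) 1 (-1) 0}) :
      Set (Matrix (Fin g ⊕ Fin g) (Fin g ⊕ Fin g) (ZMod n))) =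
    {M : Matrix (Fin g ⊕ Fin g) (Fin g ⊕ Fin g) (ZMod n) |
      Matrix.transpose M * Matrix.fromBlocks 0 1 (-1) 0 * M = Matrix.fromBlocks 0 1 (-1) 0} := by
  have hn0 : n ≠ 0 := by omega
  apply Set.Subset.antisymm
  · -- generators are symplectic
    let SpM : Submonoid (Matrix (Fin g ⊕ Fin g) (Fin g ⊕ Fin g) (ZMod n)) :=
      { carrier := {M | Mᵀ * Matrix.fromBlocks 0 1 (-1) 0 * M = Matrix.fromBlocks 0 1 (-1) 0}
        one_mem' := SpAux.sp_one
        mul_mem' := fun {a b} ha hb => SpAux.sp_mul ha hb }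
    intro x hx
    refine (Submonoid.closure_le (S := SpM)).mpr ?_ hx
    rintro M hM
    rcases hM with (hM | hM) | hM
    · obtain ⟨A, rfl⟩ := hM
      exact SpAux.sp_B A
    · obtain ⟨C, hC, rfl⟩ := hM
      exact SpAux.sp_S C hC
    · rw [Set.mem_singleton_iff] at hM
      subst hM
      exact SpAux.sp_H
  · intro M hM
    obtain ⟨A, B, C, D, hMb⟩ :
        ∃ A B C D, M = fromBlocks A B C D :=
      ⟨M.toBlocks₁₁, M.toBlocks₁₂, M.toBlocks₂₁, M.toBlocks₂₂, (fromBlocks_toBlocks M).symm⟩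
    subst hMb
    have hM' : (fromBlocks A B C D)ᵀ * SpAux.Jm g (ZMod n) * fromBlocks A B C D
        = SpAux.Jm g (ZMod n) := hM
    obtain ⟨r4, r5⟩ := SpAux.blocks_of_sp_other (SpAux.sp_other hM')
    obtain ⟨S, hSt, hSu⟩ := pivotProp_zmod n hn0 g A B r4
      ⟨Dᵀ, -Cᵀ, by rw [mul_neg, ← sub_eq_add_neg]; exact r5⟩
    have hS1sp := SpAux.sp_S S hSt
    have hNsp := SpAux.sp_mul hM' hS1sp
    have hNb : fromBlocks A B C D * fromBlocks 1 0 S 1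
        = fromBlocks (A + B * S) B (C + D * S) D := by
      rw [fromBlocks_multiply]
      simp only [mul_one, mul_zero, one_mul, zero_mul, add_zero, zero_add]
    rw [hNb] at hNsp
    obtain ⟨u, hu⟩ := hSu
    have hdec0 := SpAux.decompose (R := ZMod n) (g := g) u hu hNsp
    obtain ⟨hc, hb, hdec⟩ := hdec0
    have hcancel : fromBlocks (1 : Matrix (Fin g) (Fin g) (ZMod n)) 0 S 1 *
        fromBlocks 1 0 (-S) 1
        = (1 : Matrix (Fin g ⊕ Fin g) (Fin g ⊕ Fin g) (ZMod n)) := by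
      rw [fromBlocks_multiply]
      simp only [mul_one, mul_zero, one_mul, zero_mul, add_zero, zero_add,
        add_neg_cancel, fromBlocks_one]
    have key : fromBlocks A B C D =
        fromBlocks 1 0 ((C + D * S) * (↑u⁻¹ : Matrix (Fin g) (Fin g) (ZMod n))) 1 *
          fromBlocks (A + B * S) 0 0 ((↑u⁻¹ : Matrix (Fin g) (Fin g) (ZMod n)))ᵀ *
          fromBlocks 1 ((↑u⁻¹ : Matrix (Fin g) (Fin g) (ZMod n)) * B) 0 1 *
          fromBlocks 1 0 (-S) 1 := by
      rw [← hdec, ← hNb, mul_assoc, hcancel, mul_one]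
    rw [key]
    refine mul_mem (mul_mem (mul_mem ?_ ?_) ?_) ?_
    · exact Submonoid.subset_closure (Or.inl (Or.inr ⟨_, hc, rfl⟩))
    · exact Submonoid.subset_closure (Or.inl (Or.inl ⟨u, by rw [hu]⟩))
    · rw [SpAux.Ugen]
      have mH : SpAux.Jm g (ZMod n) ∈ Submonoid.closure
          ({M | ∃ A : GL (Fin g) (ZMod n),
              M = Matrix.fromBlocks (A : Matrix (Fin g) (Fin g) (ZMod n)) 0 0
                (Matrix.transpose ((A⁻¹ : GL (Fin g) (ZMod n)) :
                  Matrix (Fin g) (Fin g) (ZMod n)))} ∪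
           {M | ∃ C : Matrix (Fin g) (Fin g) (ZMod n), C.IsSymm ∧
              M = Matrix.fromBlocks 1 0 C 1} ∪
           {Matrix.fromBlocks (0 : Matrix (Fin g) (Fin g) (ZMod n)) 1 (-1) 0}) :=
        Submonoid.subset_closure (Or.inr rfl)
      refine mul_mem (mul_mem mH (Submonoid.subset_closure
        (Or.inl (Or.inr ⟨-((↑u⁻¹ : Matrix (Fin g) (Fin g) (ZMod n)) * B), ?_, rfl⟩))))
        (mul_mem mH (mul_mem mH mH))
      show (-((↑u⁻¹ : Matrix (Fin g) (Fin g) (ZMod n)) * B))ᵀ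
          = -((↑u⁻¹ : Matrix (Fin g) (Fin g) (ZMod n)) * B)
      rw [transpose_neg, hb]
    · refine Submonoid.subset_closure (Or.inl (Or.inr ⟨-S, ?_, rfl⟩))
      show (-S)ᵀ = -S
      rw [transpose_neg, hSt]
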